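/- Let L be a symmetric n×n matrix over a commutative ring. Then (-1)^n det(L) equals the sum, over all partitions {I_1,…,I_k} of {1,…,n} into nonempty blocks, of (-1)^k ∏_{j=1}^k 𝓘(I_j), where for a block I = {i} one sets 𝓘(I) = L_{i,i}, and for a block I = {i_1,…,i_m} with m > 1 one sets 𝓘(I) = Σ_{σ ∈ S_{m-1}} L_{i_m, i_{σ(1)}} L_{i_{σ(1)}, i_{σ(2)}} ⋯ L_{i_{σ(m-1)}, i_m} (the sum over cyclic chain products through the remaining m−1 indices). -/

import Mathlib

/-- The product of entries along a chain from `i` to `j` passing through the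
list `l` of intermediate indices. -/
def chainProd {n : ℕ} {R : Type*} [CommRing R] (L : Matrix (Fin n) (Fin n) R) :
    Fin n → Fin n → List (Fin n) → R
  | i, j, [] => L i j
  | i, j, a :: l => L i a * chainProd L a j l

/-- The sum, over all orderings of the finite set `I`, of the chain products
from `i` to `j` through that ordering. -/
noncomputable def chainSum {n : ℕ} {R : Type*} [CommRing R] (L : Matrix (Fin n) (Fin n) R)
    (i j : Fin n) (I : Finset (Fin n)) : R :=
  (I.toList.permutations.map (chainProd L i j)).sum

/-- The quantity `𝓘(I)`: for `I = {i}` it is `L i i`, and for `|I| = m > 1`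
it is the sum over all orderings of `I \ {i_m}` of the closed chain products
based at a distinguished element `i_m ∈ I` (here chosen as `I.max'`). -/
noncomputable def blockInv {n : ℕ} {R : Type*} [CommRing R] (L : Matrix (Fin n) (Fin n) R)
    (I : Finset (Fin n)) : R :=
  if h : I.Nonempty then
    chainSum L (I.max' h) (I.max' h) (I.erase (I.max' h))
  else 0

namespace DetPartition

open Equiv Equiv.Perm Finset List

variable {n : ℕ} {R : Type*} [CommRing R] (L : Matrix (Fin n) (Fin n) R)

lemma prod_map_formPerm_swap (j : Fin n) :
    ∀ (x : Fin n) (l : List (Fin n)), (x :: l).Nodup → j ∉ l →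
    ((x :: l).map (fun i => L i ((Equiv.swap j x) ((x :: l).formPerm i)))).prod
      = chainProd L x j l := by
  intro x l
  induction l generalizing x with
  | nil => intro _ _; simp [chainProd]
  | cons y l' ih =>
    intro hnd hj
    have hxny : x ∉ (y :: l') := (List.nodup_cons.mp hnd).1
    have hnd' : (y :: l').Nodup := (List.nodup_cons.mp hnd).2
    have hjy : j ≠ y := fun h => hj (h ▸ List.mem_cons_self (a := y) (l := l'))
    have hjl' : j ∉ l' := fun h => hj (List.mem_cons_of_mem _ h)
    have hxy : x ≠ y := fun h => hxny (h ▸ List.mem_cons_self (a := y) (l := l'))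
    have hhead : (x :: y :: l').formPerm x = y := List.formPerm_apply_head x y l' hnd
    rw [List.map_cons, List.prod_cons, hhead]
    have hswap : Equiv.swap j x y = y := by
      rw [Equiv.swap_apply_of_ne_of_ne (Ne.symm hjy) (Ne.symm hxy)]
    rw [hswap]
    have hmapeq : ((y :: l').map (fun i => L i ((Equiv.swap j x) ((x :: y :: l').formPerm i)))).prod
        = ((y :: l').map (fun i => L i ((Equiv.swap j y) ((y :: l').formPerm i)))).prod := by
      congr 1
      apply List.map_congr_left
      intro a ha
      congr 1
      have h1 : (x :: y :: l').formPerm a = Equiv.swap x y ((y :: l').formPerm a) := by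
        rw [List.formPerm_cons_cons]; rfl
      rw [h1]
      set b := (y :: l').formPerm a with hb
      have hbmem : b ∈ (y :: l') := List.formPerm_apply_mem_of_mem ha
      have hbx : b ≠ x := fun h => hxny (h ▸ hbmem)
      by_cases hby : b = y
      · simp [hby]
      · have hbj : b ≠ j := by
          intro h
          rcases List.mem_cons.mp hbmem with h' | h'
          · exact hby h'
          · exact hjl' (h ▸ h')
        rw [Equiv.swap_apply_of_ne_of_ne hbx hby, Equiv.swap_apply_of_ne_of_ne hbj hbx,
          Equiv.swap_apply_of_ne_of_ne hbj hby]
    rw [hmapeq, ih y hnd' hjl']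
    rfl

lemma prod_map_formPerm (x : Fin n) (l : List (Fin n)) (h : (x :: l).Nodup) :
    ((x :: l).map (fun i => L i ((x :: l).formPerm i))).prod = chainProd L x x l := by
  have := prod_map_formPerm_swap L x x l h (List.nodup_cons.mp h).1
  simpa [Equiv.swap_self] using this


def IsPartition (S : Finset (Fin n)) (P : Finset (Finset (Fin n))) : Prop :=
  (∀ I ∈ P, I.Nonempty) ∧ (∀ I ∈ P, ∀ J ∈ P, I ≠ J → Disjoint I J) ∧
    P.biUnion id = S

open Classical in
noncomputable def partSum (S : Finset (Fin n)) : R :=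
  ∑ P ∈ Finset.univ.filter (fun P : Finset (Finset (Fin n)) => IsPartition S P),
    (-1 : R) ^ P.card * ∏ I ∈ P, blockInv L I

noncomputable def blockOf (P : Finset (Finset (Fin n))) (b : Fin n) : Finset (Fin n) :=
  P.sup (fun I => if b ∈ I then I else ∅)

lemma blockOf_eq {P : Finset (Finset (Fin n))} {S : Finset (Fin n)}
    (hP : IsPartition S P) {b : Fin n} {I : Finset (Fin n)} (hI : I ∈ P) (hbI : b ∈ I) :
    blockOf P b = I := by
  apply _root_.le_antisymm
  · apply Finset.sup_le
    intro J hJ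
    by_cases hbJ : b ∈ J
    · rw [if_pos hbJ]
      by_contra hne
      have hJI : J ≠ I := by
        intro h; exact hne (h ▸ le_refl J)
      have := hP.2.1 J hJ I hI hJI
      exact absurd (Finset.disjoint_left.mp this hbJ) (fun h => h hbI)
    · rw [if_neg hbJ]; exact Finset.empty_subset I
  · show I ≤ blockOf P b
    have := Finset.le_sup (f := fun J => if b ∈ J then J else ∅) hI
    simpa [blockOf, hbI] using this

lemma exists_block {P : Finset (Finset (Fin n))} {S : Finset (Fin n)}
    (hP : IsPartition S P) {b : Fin n} (hb : b ∈ S) :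
    blockOf P b ∈ P ∧ b ∈ blockOf P b := by
  have : b ∈ P.biUnion id := hP.2.2 ▸ hb
  obtain ⟨I, hI, hbI⟩ := Finset.mem_biUnion.mp this
  rw [blockOf_eq hP hI hbI]
  exact ⟨hI, hbI⟩

lemma block_subset {P : Finset (Finset (Fin n))} {S : Finset (Fin n)}
    (hP : IsPartition S P) {I : Finset (Fin n)} (hI : I ∈ P) : I ⊆ S :=
  hP.2.2 ▸ Finset.subset_biUnion_of_mem id hI

lemma erase_isPartition {P : Finset (Finset (Fin n))} {S : Finset (Fin n)}
    (hP : IsPartition S P) {I : Finset (Fin n)} (hI : I ∈ P) :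
    IsPartition (S \ I) (P.erase I) := by
  refine ⟨fun J hJ => hP.1 J (Finset.mem_of_mem_erase hJ), ?_, ?_⟩
  · intro J hJ K hK hne
    exact hP.2.1 J (Finset.mem_of_mem_erase hJ) K (Finset.mem_of_mem_erase hK) hne
  · ext x
    simp only [Finset.mem_biUnion, Finset.mem_sdiff, id_eq]
    constructor
    · rintro ⟨J, hJ, hxJ⟩
      have hJP := Finset.mem_of_mem_erase hJ
      refine ⟨block_subset hP hJP hxJ, fun hxI => ?_⟩
      have hJI : J ≠ I := Finset.ne_of_mem_erase hJ
      exact Finset.disjoint_left.mp (hP.2.1 J hJP I hI hJI) hxJ hxI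
    · rintro ⟨hxS, hxI⟩
      obtain ⟨J, hJ, hxJ⟩ := Finset.mem_biUnion.mp (hP.2.2 ▸ hxS)
      refine ⟨J, Finset.mem_erase.mpr ⟨fun h => hxI (h ▸ hxJ), hJ⟩, hxJ⟩

lemma insert_isPartition {S I : Finset (Fin n)} (hIS : I ⊆ S) (hIne : I.Nonempty)
    {Q : Finset (Finset (Fin n))} (hQ : IsPartition (S \ I) Q) :
    IsPartition S (insert I Q) := by
  have hJdisj : ∀ J ∈ Q, Disjoint I J := by
    intro J hJ
    have hJsub : J ⊆ S \ I := hQ.2.2 ▸ Finset.subset_biUnion_of_mem id hJ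
    exact Finset.disjoint_left.mpr fun {x} hx hxJ => (Finset.mem_sdiff.mp (hJsub hxJ)).2 hx
  refine ⟨?_, ?_, ?_⟩
  · intro J hJ
    rcases Finset.mem_insert.mp hJ with h | h
    · exact h ▸ hIne
    · exact hQ.1 J h
  · intro J hJ K hK hne
    rcases Finset.mem_insert.mp hJ with h | h <;> rcases Finset.mem_insert.mp hK with h' | h'
    · exact absurd (h.trans h'.symm) hne
    · exact h ▸ hJdisj K h'
    · exact h' ▸ (hJdisj J h).symm
    · exact hQ.2.1 J h K h' hne
  · rw [Finset.biUnion_insert, hQ.2.2]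
    exact Finset.union_sdiff_of_subset hIS


open Classical in
lemma partSum_rec (S : Finset (Fin n)) (hS : S.Nonempty) :
    partSum L S = ∑ I ∈ S.powerset.filter (fun I => S.max' hS ∈ I),
      (-(blockInv L I)) * partSum L (S \ I) := by
  classical
  set b := S.max' hS with hb
  have hbS : b ∈ S := S.max'_mem hS
  simp only [partSum, Finset.mul_sum]
  rw [Finset.sum_sigma']
  symm
  apply Finset.sum_nbij' (i := fun p => insert p.1 p.2)
    (j := fun P => ⟨blockOf P b, P.erase (blockOf P b)⟩)
  · rintro ⟨I, Q⟩ hp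
    simp only [Finset.mem_sigma, Finset.mem_filter, Finset.mem_powerset, Finset.mem_univ,
      true_and] at hp
    obtain ⟨⟨hIS, hbI⟩, hQ⟩ := hp
    simp only [Finset.mem_filter, Finset.mem_univ, true_and]
    exact insert_isPartition hIS ⟨b, hbI⟩ hQ
  · intro P hP
    simp only [Finset.mem_filter, Finset.mem_univ, true_and] at hP
    obtain ⟨hIP, hbI⟩ := exists_block hP hbS
    simp only [Finset.mem_sigma, Finset.mem_filter, Finset.mem_powerset, Finset.mem_univ,
      true_and]
    exact ⟨⟨block_subset hP hIP, hbI⟩, erase_isPartition hP hIP⟩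
  · rintro ⟨I, Q⟩ hp
    simp only [Finset.mem_sigma, Finset.mem_filter, Finset.mem_powerset, Finset.mem_univ,
      true_and] at hp
    obtain ⟨⟨hIS, hbI⟩, hQ⟩ := hp
    have hpart := insert_isPartition hIS ⟨b, hbI⟩ hQ
    have hIQ : I ∉ Q := by
      intro h
      have hIsub : I ⊆ S \ I := hQ.2.2 ▸ Finset.subset_biUnion_of_mem id h
      exact (Finset.mem_sdiff.mp (hIsub hbI)).2 hbI
    have h1 : blockOf (insert I Q) b = I :=
      blockOf_eq hpart (Finset.mem_insert_self I Q) hbI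
    simp only [h1, Finset.erase_insert hIQ]
  · intro P hP
    simp only [Finset.mem_filter, Finset.mem_univ, true_and] at hP
    obtain ⟨hIP, _⟩ := exists_block hP hbS
    simp only [Finset.insert_erase hIP]
  · rintro ⟨I, Q⟩ hp
    simp only [Finset.mem_sigma, Finset.mem_filter, Finset.mem_powerset, Finset.mem_univ,
      true_and] at hp
    obtain ⟨⟨hIS, hbI⟩, hQ⟩ := hp
    have hIQ : I ∉ Q := by
      intro h
      have hIsub : I ⊆ S \ I := hQ.2.2 ▸ Finset.subset_biUnion_of_mem id h
      exact (Finset.mem_sdiff.mp (hIsub hbI)).2 hbI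
    rw [Finset.card_insert_of_notMem hIQ, Finset.prod_insert hIQ]
    ring


def permsOf (S : Finset (Fin n)) : Finset (Perm (Fin n)) :=
  Finset.univ.filter fun σ => σ.support ⊆ S

noncomputable def detSum (S : Finset (Fin n)) : R :=
  ∑ σ ∈ permsOf S, ((Equiv.Perm.sign σ : ℤ) : R) * ∏ i ∈ S, L i (σ i)

/-- the orbit of `b` under `σ`, as a finset containing `b` -/
def orbitB (b : Fin n) (σ : Perm (Fin n)) : Finset (Fin n) :=
  insert b (σ.cycleOf b).support

lemma apply_eq_cycleOf_of_mem_orbitB {σ : Perm (Fin n)} {b x : Fin n}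
    (hx : x ∈ orbitB b σ) : σ x = (σ.cycleOf b) x := by
  rcases Finset.mem_insert.mp hx with h | h
  · subst h; exact (cycleOf_apply_self σ x).symm
  · exact ((mem_support_cycleOf_iff.mp h).1.cycleOf_apply).symm

lemma mem_orbitB_iff {σ : Perm (Fin n)} {b : Fin n} (hb : b ∈ σ.support) {x : Fin n} :
    x ∈ orbitB b σ ↔ σ.SameCycle b x := by
  simp only [orbitB, Finset.mem_insert, mem_support_cycleOf_iff, hb, and_true]
  constructor
  · rintro (rfl | h)
    · exact SameCycle.refl σ x
    · exact h
  · intro h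
    exact Or.inr h

lemma orbitB_of_not_mem_support {σ : Perm (Fin n)} {b : Fin n} (hb : b ∉ σ.support) :
    orbitB b σ = {b} := by
  rw [orbitB, (cycleOf_eq_one_iff σ).mpr (notMem_support.mp hb)]
  simp

lemma apply_not_mem_orbitB {σ : Perm (Fin n)} {b x : Fin n}
    (hx : x ∉ orbitB b σ) : σ x ∉ orbitB b σ := by
  by_cases hb : b ∈ σ.support
  · rw [mem_orbitB_iff hb] at hx ⊢
    rwa [sameCycle_apply_right]
  · rw [orbitB_of_not_mem_support hb] at hx ⊢
    simp only [Finset.mem_singleton] at hx ⊢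
    intro h
    have hb' : σ b = b := notMem_support.mp hb
    exact hx (σ.injective (h.trans hb'.symm))

lemma cycleOf_support_subset_orbitB (σ : Perm (Fin n)) (b : Fin n) :
    (σ.cycleOf b).support ⊆ orbitB b σ := Finset.subset_insert _ _

/-- the complementary permutation fixes the orbit -/
lemma rest_support {σ : Perm (Fin n)} {b : Fin n} {S : Finset (Fin n)}
    (hσ : σ.support ⊆ S) :
    ((σ.cycleOf b)⁻¹ * σ).support ⊆ S \ orbitB b σ := by
  intro x hx
  rw [mem_support] at hx
  have hxI : x ∉ orbitB b σ := by
    intro hmem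
    apply hx
    simp only [Perm.mul_apply]
    rw [apply_eq_cycleOf_of_mem_orbitB hmem]
    simp
  have hσx : σ x ≠ x := by
    intro h
    apply hx
    simp only [Perm.mul_apply]
    have : (σ.cycleOf b) x = x := notMem_support.mp
      (fun hm => hxI (cycleOf_support_subset_orbitB σ b hm))
    rw [h]
    exact Equiv.Perm.inv_eq_iff_eq.mpr this.symm
  exact Finset.mem_sdiff.mpr ⟨hσ (mem_support.mpr hσx), hxI⟩


lemma mem_permsOf {S : Finset (Fin n)} {σ : Perm (Fin n)} :
    σ ∈ permsOf S ↔ σ.support ⊆ S := by simp [permsOf]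

section Fiber

variable {b : Fin n} {I S : Finset (Fin n)}

lemma target_facts {l : List (Fin n)} (hl : l ∈ (I.erase b).toList.permutations) :
    l.toFinset = I.erase b ∧ (b :: l).Nodup := by
  have hp : l ~ (I.erase b).toList := List.mem_permutations.mp hl
  have h1 : l.toFinset = I.erase b := by
    rw [List.toFinset_eq_of_perm _ _ hp]; exact Finset.toList_toFinset _
  have h2 : l.Nodup := hp.nodup_iff.mpr (Finset.nodup_toList _)
  have hbl : b ∉ l := by
    intro h
    exact (Finset.mem_erase.mp (h1 ▸ List.mem_toFinset.mpr h)).1 rfl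
  exact ⟨h1, List.nodup_cons.mpr ⟨hbl, h2⟩⟩

lemma formPerm_support_subset {l : List (Fin n)} (h1 : l.toFinset = I.erase b)
    (hbI : b ∈ I) : ((b :: l).formPerm).support ⊆ I := by
  intro x hx
  have h := List.support_formPerm_le (b :: l) hx
  simp only [List.toFinset_cons, h1] at h
  rwa [Finset.insert_erase hbI] at h

lemma cycleOf_formPerm_self {l : List (Fin n)} (hnd : (b :: l).Nodup) :
    ((b :: l).formPerm).cycleOf b = (b :: l).formPerm := by
  cases l with
  | nil => rw [List.formPerm_singleton]; exact (cycleOf_eq_one_iff 1).mpr rfl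
  | cons y l' =>
    have hcyc : ((b :: y :: l').formPerm).IsCycle :=
      List.isCycle_formPerm hnd (by simp)
    have hhead : (b :: y :: l').formPerm b = y := List.formPerm_apply_head _ _ _ hnd
    have hby : y ≠ b := by
      have := (List.nodup_cons.mp hnd).1
      intro h; exact this (h ▸ List.mem_cons_self (a := y) (l := l'))
    exact hcyc.cycleOf_eq (by rw [hhead]; exact hby)

lemma support_formPerm_eq {l : List (Fin n)} (hnd : (b :: l).Nodup) (hne : l ≠ []) :
    ((b :: l).formPerm).support = (b :: l).toFinset := by
  apply List.support_formPerm_of_nodup _ hnd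
  intro x hx
  cases l with
  | nil => exact hne rfl
  | cons y l' => simp at hx

lemma disjoint_formPerm_rest {l : List (Fin n)} {τ : Perm (Fin n)}
    (h1 : l.toFinset = I.erase b) (hbI : b ∈ I) (hτ : τ.support ⊆ S \ I) :
    Perm.Disjoint ((b :: l).formPerm) τ := by
  rw [Equiv.Perm.disjoint_iff_disjoint_support]
  apply Finset.disjoint_left.mpr
  intro x hx hx'
  have hxI : x ∈ I := formPerm_support_subset h1 hbI hx
  exact (Finset.mem_sdiff.mp (hτ hx')).2 hxI

lemma cycleOf_mul_eq {l : List (Fin n)} {τ : Perm (Fin n)}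
    (h1 : l.toFinset = I.erase b) (hnd : (b :: l).Nodup) (hbI : b ∈ I)
    (hτ : τ.support ⊆ S \ I) :
    ((b :: l).formPerm * τ).cycleOf b = (b :: l).formPerm := by
  have hd := disjoint_formPerm_rest h1 hbI hτ
  have hτb : τ b = b := by
    by_contra h
    exact (Finset.mem_sdiff.mp (hτ (mem_support.mpr h))).2 hbI
  rw [hd.cycleOf_mul_distrib, cycleOf_formPerm_self hnd,
    (cycleOf_eq_one_iff τ).mpr hτb, mul_one]

lemma toList_mul_eq {l : List (Fin n)} {τ : Perm (Fin n)}
    (h1 : l.toFinset = I.erase b) (hnd : (b :: l).Nodup) (hbI : b ∈ I)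
    (hτ : τ.support ⊆ S \ I) :
    ((b :: l).formPerm * τ).toList b = ((b :: l).formPerm).toList b := by
  have hd := disjoint_formPerm_rest h1 hbI hτ
  have hτb : τ b = b := by
    by_contra h
    exact (Finset.mem_sdiff.mp (hτ (mem_support.mpr h))).2 hbI
  unfold Equiv.Perm.toList
  rw [cycleOf_mul_eq h1 hnd hbI hτ, cycleOf_formPerm_self hnd]
  apply List.ext_getElem (by simp)
  intro k _ _
  rw [List.getElem_iterate, List.getElem_iterate, iterate_eq_pow, iterate_eq_pow,
    hd.commute.mul_pow, Perm.mul_apply, pow_apply_eq_self_of_apply_eq_self hτb]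

lemma toList_formPerm_cons {l : List (Fin n)} (hnd : (b :: l).Nodup) (hne : l ≠ []) :
    ((b :: l).formPerm).toList b = b :: l := by
  have h2 : 2 ≤ (b :: l).length := by
    cases l with
    | nil => exact absurd rfl hne
    | cons y l' => simp
  have := Equiv.Perm.toList_formPerm_nontrivial (b :: l) h2 hnd
  simpa using this


lemma toList_eq_cons {σ : Perm (Fin n)} (hb : b ∈ σ.support) :
    σ.toList b = b :: (σ.toList b).tail := by
  have hpos : 0 < (σ.toList b).length := length_toList_pos_of_mem_support _ _ hb
  have hne : σ.toList b ≠ [] := List.ne_nil_of_length_pos hpos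
  have h0 := toList_getElem_zero σ b hb
  have hhead : (σ.toList b).head hne = b := by
    rw [List.head_eq_getElem_zero hne]
    simpa [List.get_eq_getElem] using h0
  conv_lhs => rw [← List.cons_head_tail hne, hhead]

lemma fiber_facts {σ : Perm (Fin n)} {I : Finset (Fin n)} (horb : orbitB b σ = I) :
    (σ.toList b).tail.toFinset = I.erase b ∧
      (b :: (σ.toList b).tail).formPerm = σ.cycleOf b := by
  by_cases hb : b ∈ σ.support
  · have hcons := toList_eq_cons hb
    have hnd : (σ.toList b).Nodup := nodup_toList σ b
    have htf : (σ.toList b).toFinset = (σ.cycleOf b).support := by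
      ext x
      simp only [List.mem_toFinset, mem_toList_iff, mem_support_cycleOf_iff]
    have hbsup : b ∈ (σ.cycleOf b).support :=
      mem_support_cycleOf_iff.mpr ⟨SameCycle.refl _ _, hb⟩
    have hIsup : I = (σ.cycleOf b).support := by
      rw [← horb, orbitB, Finset.insert_eq_self.mpr hbsup]
    constructor
    · rw [hcons] at hnd htf
      have hbt : b ∉ (σ.toList b).tail := (List.nodup_cons.mp hnd).1
      rw [List.toFinset_cons] at htf
      rw [hIsup, ← htf, Finset.erase_insert (by simpa using hbt)]
    · rw [← hcons, formPerm_toList]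
  · have hτl : σ.toList b = [] := toList_eq_nil_iff.mpr hb
    have hI : I = {b} := by rw [← horb, orbitB_of_not_mem_support hb]
    constructor
    · simp [hτl, hI]
    · simp [hτl, List.formPerm_singleton,
        (cycleOf_eq_one_iff σ).mpr (notMem_support.mp hb)]

lemma fiber_sum (S : Finset (Fin n)) (I : Finset (Fin n))
    (hIS : I ⊆ S) (hbI : b ∈ I) (f : Perm (Fin n) → R) :
    ∑ σ ∈ (permsOf S).filter (fun σ => orbitB b σ = I), f σ
      = ∑ p ∈ ((I.erase b).toList.permutations.toFinset ×ˢ permsOf (S \ I)),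
          f ((b :: p.1).formPerm * p.2) := by
  apply Finset.sum_nbij'
    (i := fun σ => ((σ.toList b).tail, (σ.cycleOf b)⁻¹ * σ))
    (j := fun p => (b :: p.1).formPerm * p.2)
  · intro σ hσ
    rw [Finset.mem_filter, mem_permsOf] at hσ
    obtain ⟨hσS, horb⟩ := hσ
    obtain ⟨htf, hfp⟩ := fiber_facts horb
    rw [Finset.mem_product]
    constructor
    · rw [List.mem_toFinset, List.mem_permutations]
      apply List.perm_of_nodup_nodup_toFinset_eq
        ((nodup_toList σ b).sublist (List.tail_sublist _)) (Finset.nodup_toList _)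
      rw [htf, Finset.toList_toFinset]
    · rw [mem_permsOf]
      have := rest_support (b := b) hσS
      rwa [horb] at this
  · rintro ⟨l, τ⟩ hp
    rw [Finset.mem_product] at hp
    obtain ⟨hl, hτ⟩ := hp
    rw [mem_permsOf] at hτ
    obtain ⟨h1, hnd⟩ := target_facts (List.mem_toFinset.mp hl)
    rw [Finset.mem_filter, mem_permsOf]
    refine ⟨?_, ?_⟩
    · intro x hx
      have hm := Equiv.Perm.support_mul_le ((b :: l).formPerm) τ hx
      rcases Finset.mem_union.mp hm with h | h
      · exact hIS (formPerm_support_subset h1 hbI h)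
      · exact (Finset.mem_sdiff.mp (hτ h)).1
    · rw [orbitB, cycleOf_mul_eq h1 hnd hbI hτ]
      cases l with
      | nil =>
        have h0 : I.erase b = ∅ := by rw [← h1]; simp
        have hIb : I = {b} := by
          rw [← Finset.insert_erase hbI, h0]
          rfl
        rw [List.formPerm_singleton, hIb]
        simp
      | cons y l' =>
        rw [support_formPerm_eq hnd (by simp)]
        rw [List.toFinset_cons, h1, Finset.insert_idem, Finset.insert_erase hbI]
  · intro σ hσ
    rw [Finset.mem_filter, mem_permsOf] at hσ
    obtain ⟨htf, hfp⟩ := fiber_facts hσ.2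
    simp only [hfp, mul_inv_cancel_left]
  · rintro ⟨l, τ⟩ hp
    rw [Finset.mem_product] at hp
    obtain ⟨hl, hτm⟩ := hp
    rw [mem_permsOf] at hτm
    obtain ⟨h1, hnd⟩ := target_facts (List.mem_toFinset.mp hl)
    have hcyc := cycleOf_mul_eq h1 hnd hbI hτm
    have htl : (((b :: l).formPerm * τ).toList b).tail = l := by
      rw [toList_mul_eq h1 hnd hbI hτm]
      cases l with
      | nil => rw [List.formPerm_singleton]; simp
      | cons y l' =>
        rw [toList_formPerm_cons hnd (by simp)]
        rfl
    simp only [htl, hcyc, inv_mul_cancel_left]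
  · intro σ hσ
    rw [Finset.mem_filter, mem_permsOf] at hσ
    obtain ⟨htf, hfp⟩ := fiber_facts hσ.2
    rw [hfp, mul_inv_cancel_left]

end Fiber

lemma max'_block {S I : Finset (Fin n)} (hS : S.Nonempty) (hIS : I ⊆ S) (hbI : S.max' hS ∈ I) :
    I.max' ⟨_, hbI⟩ = S.max' hS :=
  _root_.le_antisymm (Finset.max'_le _ _ _ fun y hy => Finset.le_max' S y (hIS hy))
    (Finset.le_max' I _ hbI)

lemma blockInv_eq {S I : Finset (Fin n)} (hS : S.Nonempty) (hIS : I ⊆ S) (hbI : S.max' hS ∈ I) :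
    blockInv L I = chainSum L (S.max' hS) (S.max' hS) (I.erase (S.max' hS)) := by
  have hne : I.Nonempty := ⟨_, hbI⟩
  rw [blockInv, dif_pos hne, max'_block hS hIS hbI]

lemma chainSum_eq_sum_toFinset (i j : Fin n) (J : Finset (Fin n)) :
    ∑ l ∈ J.toList.permutations.toFinset, chainProd L i j l = chainSum L i j J := by
  rw [chainSum, ← List.sum_toFinset _ (List.nodup_permutations _ (Finset.nodup_toList _))]

lemma eval_term {S I : Finset (Fin n)} {b : Fin n} (hIS : I ⊆ S) (hbI : b ∈ I)
    {l : List (Fin n)} (h1 : l.toFinset = I.erase b) (hnd : (b :: l).Nodup)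
    {τ : Perm (Fin n)} (hτ : τ.support ⊆ S \ I) :
    ((Equiv.Perm.sign ((b :: l).formPerm * τ) : ℤ) : R)
        * ∏ i ∈ S, L i (((b :: l).formPerm * τ) i)
      = ((-1 : R) ^ (I.card + 1) * chainProd L b b l)
        * (((Equiv.Perm.sign τ : ℤ) : R) * ∏ i ∈ S \ I, L i (τ i)) := by
  set c := (b :: l).formPerm with hc
  have hsupc : c.support ⊆ I := formPerm_support_subset h1 hbI
  have hτI : ∀ i ∈ I, τ i = i := fun i hi => notMem_support.mp
    (fun h => (Finset.mem_sdiff.mp (hτ h)).2 hi)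
  have hlen : I.card = l.length + 1 := by
    rw [← Finset.card_erase_add_one hbI, ← h1,
      List.card_toFinset, List.dedup_eq_self.mpr (List.nodup_cons.mp hnd).2]
  have hsign : ((Equiv.Perm.sign c : ℤ) : R) = (-1 : R) ^ (I.card + 1) := by
    cases l with
    | nil =>
      have h1' : c = 1 := List.formPerm_singleton b
      rw [h1', map_one, hlen]
      norm_num
    | cons y l' =>
      have hcyc : c.IsCycle := List.isCycle_formPerm hnd (by simp)
      have hsupp : c.support.card = I.card := by
        rw [support_formPerm_eq hnd (by simp), List.card_toFinset,
          List.dedup_eq_self.mpr hnd, hlen]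
        rfl
      rw [hcyc.sign, hsupp]
      push_cast
      rw [pow_succ]
      ring
  have hprod : ∏ i ∈ S, L i ((c * τ) i)
      = (∏ i ∈ S \ I, L i (τ i)) * chainProd L b b l := by
    rw [← Finset.prod_sdiff hIS]
    congr 1
    · apply Finset.prod_congr rfl
      intro i hi
      have hτi : τ i ∉ I := by
        by_cases h : i ∈ τ.support
        · exact fun hIn => (Finset.mem_sdiff.mp (hτ (apply_mem_support.mpr h))).2 hIn
        · rw [notMem_support.mp h]; exact (Finset.mem_sdiff.mp hi).2
      have hcfix : c (τ i) = τ i := notMem_support.mp (fun h => hτi (hsupc h))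
      simp [Perm.mul_apply, hcfix]
    · have hIfin : I = (b :: l).toFinset := by
        rw [List.toFinset_cons, h1, Finset.insert_erase hbI]
      have happly : ∀ i ∈ I, (c * τ) i = c i := by
        intro i hi; simp [Perm.mul_apply, hτI i hi]
      rw [Finset.prod_congr rfl (fun i hi => by rw [happly i hi]), hIfin,
        List.prod_toFinset _ hnd]
      exact prod_map_formPerm L b l hnd
  rw [map_mul, hprod]
  push_cast
  rw [hsign]
  ring

lemma detSum_rec (S : Finset (Fin n)) (hS : S.Nonempty) :
    detSum L S = ∑ I ∈ S.powerset.filter (fun I => S.max' hS ∈ I),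
      ((-1 : R) ^ (I.card + 1) * blockInv L I) * detSum L (S \ I) := by
  set b := S.max' hS with hb
  have hbS : b ∈ S := S.max'_mem hS
  have hmaps : ∀ σ ∈ permsOf S, orbitB b σ ∈ S.powerset.filter (fun I => b ∈ I) := by
    intro σ hσ
    rw [mem_permsOf] at hσ
    simp only [Finset.mem_filter, Finset.mem_powerset]
    exact ⟨Finset.insert_subset hbS ((support_cycleOf_le σ b).trans hσ),
      Finset.mem_insert_self _ _⟩
  rw [detSum, ← Finset.sum_fiberwise_of_maps_to hmaps]
  apply Finset.sum_congr rfl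
  intro I hI
  simp only [Finset.mem_filter, Finset.mem_powerset] at hI
  obtain ⟨hIS, hbI⟩ := hI
  rw [fiber_sum S I hIS hbI, Finset.sum_product]
  have heval : ∀ l ∈ (I.erase b).toList.permutations.toFinset,
      (∑ τ ∈ permsOf (S \ I), ((Equiv.Perm.sign ((b :: l).formPerm * τ) : ℤ) : R)
        * ∏ i ∈ S, L i (((b :: l).formPerm * τ) i))
      = ((-1 : R) ^ (I.card + 1) * chainProd L b b l) * detSum L (S \ I) := by
    intro l hl
    obtain ⟨h1, hnd⟩ := target_facts (List.mem_toFinset.mp hl)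
    rw [detSum, Finset.mul_sum]
    apply Finset.sum_congr rfl
    intro τ hτ
    rw [mem_permsOf] at hτ
    rw [eval_term L hIS hbI h1 hnd hτ]
  rw [Finset.sum_congr rfl heval, ← Finset.sum_mul]
  congr 1
  rw [← Finset.mul_sum, chainSum_eq_sum_toFinset, ← blockInv_eq L hS hIS hbI]

lemma partSum_empty : partSum L (∅ : Finset (Fin n)) = 1 := by
  classical
  rw [partSum]
  have hfilt : Finset.univ.filter (fun P : Finset (Finset (Fin n)) => IsPartition ∅ P)
      = {∅} := by
    ext P
    simp only [Finset.mem_filter, Finset.mem_univ, true_and, Finset.mem_singleton]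
    constructor
    · rintro ⟨h1, _, h3⟩
      by_contra hne
      obtain ⟨I, hI⟩ := Finset.nonempty_iff_ne_empty.mpr hne
      obtain ⟨x, hx⟩ := h1 I hI
      have : x ∈ P.biUnion id := Finset.mem_biUnion.mpr ⟨I, hI, hx⟩
      rw [h3] at this
      exact absurd this (Finset.notMem_empty x)
    · rintro rfl
      exact ⟨by simp, by simp, by simp⟩
  rw [hfilt]
  simp

lemma detSum_empty : detSum L (∅ : Finset (Fin n)) = 1 := by
  rw [detSum]
  have hperms : permsOf (∅ : Finset (Fin n)) = {1} := by
    ext σ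
    simp [mem_permsOf, Finset.subset_empty, support_eq_empty_iff]
  rw [hperms]
  simp

lemma partSum_eq_detSum (S : Finset (Fin n)) :
    partSum L S = (-1 : R) ^ S.card * detSum L S := by
  induction S using Finset.strongInduction with
  | _ S ih =>
    rcases S.eq_empty_or_nonempty with rfl | hS
    · simp [partSum_empty, detSum_empty]
    · rw [partSum_rec L S hS, detSum_rec L S hS, Finset.mul_sum]
      apply Finset.sum_congr rfl
      intro I hI
      simp only [Finset.mem_filter, Finset.mem_powerset] at hI
      obtain ⟨hIS, hbI⟩ := hI
      have hssub : S \ I ⊂ S := Finset.sdiff_ssubset hIS ⟨_, hbI⟩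
      rw [ih (S \ I) hssub]
      have hle : I.card ≤ S.card := Finset.card_le_card hIS
      have hcard : S.card = I.card + (S \ I).card := by
        rw [Finset.card_sdiff_of_subset hIS]
        omega
      rw [hcard, pow_add, pow_succ]
      have h2 : (-1 : R) ^ I.card * (-1) ^ I.card = 1 := by
        rw [← pow_add]
        exact Even.neg_one_pow ⟨I.card, rfl⟩
      linear_combination ((-1 : R) ^ ((S \ I).card) * blockInv L I * detSum L (S \ I)) * h2

end DetPartition

open Classical in
/-- `(-1)^n det L` equals the sum over all partitions `{I₁,…,I_k}` of
`{1,…,n}` into nonempty blocks of `(-1)^k ∏_j 𝓘(I_j)`. -/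
theorem stmt_1 {n : ℕ} {R : Type*} [CommRing R] (L : Matrix (Fin n) (Fin n) R)
    (hL : L.IsSymm) :
    (-1 : R) ^ n * L.det =
      ∑ P ∈ Finset.univ.filter (fun P : Finset (Finset (Fin n)) =>
          (∀ I ∈ P, I.Nonempty) ∧ (∀ I ∈ P, ∀ J ∈ P, I ≠ J → Disjoint I J) ∧
          P.biUnion id = Finset.univ),
        (-1 : R) ^ P.card * ∏ I ∈ P, blockInv L I := by
  classical
  have h1 : L.det = DetPartition.detSum L Finset.univ := by
    rw [Matrix.det_apply', DetPartition.detSum]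
    have huniv : DetPartition.permsOf (Finset.univ : Finset (Fin n)) = Finset.univ := by
      ext σ
      simp [DetPartition.mem_permsOf]
    rw [huniv]
    apply Finset.sum_congr rfl
    intro σ _
    congr 1
    apply Finset.prod_congr rfl
    intro i _
    exact hL.apply i (σ i)
  have h2 : (∑ P ∈ Finset.univ.filter (fun P : Finset (Finset (Fin n)) =>
          (∀ I ∈ P, I.Nonempty) ∧ (∀ I ∈ P, ∀ J ∈ P, I ≠ J → Disjoint I J) ∧
          P.biUnion id = Finset.univ),
        (-1 : R) ^ P.card * ∏ I ∈ P, blockInv L I)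
      = DetPartition.partSum L Finset.univ := by
    rw [DetPartition.partSum]
    apply Finset.sum_congr _ (fun _ _ => rfl)
    apply Finset.filter_congr
    intro P _
    simp [DetPartition.IsPartition]
  rw [h1, h2, DetPartition.partSum_eq_detSum]
  congr 2
  simp
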